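/- (Uniform bound (4.26) for the second moment of the downcrossing time.) For every b > 0, with f(x) := 1/(3x³) − b/(2x²), one has limsup_{ε→0⁺} (1/ε³)·∫_{1/b}^∞ ∫_{1/b}^{y} ∫_{1/b}^{ỹ} (y·ỹ)^{−4}·exp( (1/ε²)·( −b³/6 − f(y) + f(w̃) − f(ỹ) ) ) dw̃ dỹ dy < ∞. -/

import Mathlib

open MeasureTheory Real Set Filter
open scoped Topology

private lemma exp_cube' {x : ℝ} (hx : 0 < x) : Real.exp (-x) ≤ 27 / x ^ 3 := by
  have h1 : x / 3 ≤ Real.exp (x / 3) := (Real.add_one_le_exp _).trans' (by linarith)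
  have h2 : x ^ 3 / 27 ≤ Real.exp x := by
    have h3 : (Real.exp (x/3)) ^ 3 = Real.exp x := by
      rw [← Real.exp_nat_mul]; congr 1; push_cast; ring
    calc x ^ 3 / 27 = (x/3)^3 := by ring
      _ ≤ (Real.exp (x/3))^3 := pow_le_pow_left₀ (by positivity) h1 3
      _ = Real.exp x := h3
  calc Real.exp (-x) = 1 / Real.exp x := by rw [Real.exp_neg, one_div]
    _ ≤ 1 / (x^3/27) := one_div_le_one_div_of_le (by positivity) h2
    _ = 27 / x^3 := by ring

private lemma fmono' (b : ℝ) (hb : 0 < b) {s t : ℝ} (hs : 1/b ≤ s) (hst : s ≤ t) :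
    1/(3*s^3) - b/(2*s^2) ≤ 1/(3*t^3) - b/(2*t^2) := by
  have hs0 : 0 < s := lt_of_lt_of_le (by positivity) hs
  have ht0 : 0 < t := hs0.trans_le hst
  have h1 : 1 ≤ b * s := by rw [div_le_iff₀ hb] at hs; linarith [hs]
  have h2 : 1 ≤ b * t := le_trans h1 (by nlinarith)
  rw [← sub_nonneg]
  have key : 1/(3*t^3) - b/(2*t^2) - (1/(3*s^3) - b/(2*s^2))
      = (t-s)*(3*b*s*t*(s+t) - 2*(s^2+s*t+t^2))/(6*s^3*t^3) := by
    field_simp; ring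
  rw [key]
  apply div_nonneg _ (by positivity)
  apply mul_nonneg (by linarith)
  nlinarith [sq_nonneg (s - t), mul_nonneg (sub_nonneg.2 h2) (sq_nonneg s),
    mul_nonneg (sub_nonneg.2 h1) (sq_nonneg t)]

private lemma quadlower' (b : ℝ) (hb : 0 < b) {y : ℝ} (hy : 1/b ≤ y) (hy2 : y ≤ 2/b) :
    b^5/16*(y - 1/b)^2 ≤ 1/(3*y^3) - b/(2*y^2) + b^3/6 := by
  have hy0 : 0 < y := lt_of_lt_of_le (by positivity) hy
  have h1 : 1 ≤ b * y := by rw [div_le_iff₀ hb] at hy; linarith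
  have h2 : b * y ≤ 2 := by rw [le_div_iff₀ hb] at hy2; linarith
  rw [← sub_nonneg]
  have key : 1/(3*y^3) - b/(2*y^2) + b^3/6 - b^5/16*(y - 1/b)^2
      = (8*((b*y)^3 - 3*(b*y) + 2) - 3*(b*y)^3*((b*y)-1)^2) / (48 * y^3) := by
    field_simp; ring
  rw [key]
  apply div_nonneg _ (by positivity)
  nlinarith [sq_nonneg (b*y - 1), sq_nonneg (b*y), mul_nonneg (sub_nonneg.2 h1) (sq_nonneg (b*y-1)),
    mul_nonneg (mul_nonneg (sub_nonneg.2 h1) (sub_nonneg.2 h1)) (sub_nonneg.2 h2)]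

private lemma taillower' (b : ℝ) (hb : 0 < b) {y : ℝ} (hy : 2/b ≤ y) :
    b^3/12 ≤ 1/(3*y^3) - b/(2*y^2) + b^3/6 := by
  have h0 : 1/b ≤ 2/b := by gcongr <;> norm_num
  have h1 := fmono' b hb h0 hy
  have h2 : 1/(3*(2/b)^3) - b/(2*(2/b)^2) = -(b^3)/12 := by
    field_simp; ring
  rw [h2] at h1
  linarith

private lemma shift_setIntegral' (m a : ℝ) (g : ℝ → ℝ) :
    ∫ y in Ioi a, g (y - m) = ∫ u in Ioi (a - m), g u := by
  have h1 : MeasurePreserving (fun u : ℝ => u + m) volume volume :=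
    measurePreserving_add_right volume m
  have h2 : MeasurableEmbedding (fun u : ℝ => u + m) :=
    (MeasurableEquiv.addRight m).measurableEmbedding
  have h3 := h1.setIntegral_preimage_emb h2 (fun y => g (y - m)) (Ioi a)
  simp only [add_sub_cancel_right] at h3
  rw [← h3]
  congr 1
  ext x; simp [sub_lt_iff_lt_add]

private lemma shift_integrableOn' (m a : ℝ) (g : ℝ → ℝ) (h : IntegrableOn g (Ioi (a - m))) :
    IntegrableOn (fun y => g (y - m)) (Ioi a) := by
  have h1 : MeasurePreserving (fun u : ℝ => u + m) volume volume :=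
    measurePreserving_add_right volume m
  have h2 : MeasurableEmbedding (fun u : ℝ => u + m) :=
    (MeasurableEquiv.addRight m).measurableEmbedding
  have h3 := (h1.restrict_preimage_emb h2 (Ioi a)).integrable_comp_emb h2 (g := fun y => g (y - m))
  have hpre : (fun u : ℝ => u + m) ⁻¹' Ioi a = Ioi (a - m) := by
    ext x; simp [sub_lt_iff_lt_add]
  rw [hpre] at h3
  rw [IntegrableOn, ← h3]
  apply h.congr_fun _ measurableSet_Ioi
  intro x _; simp

private lemma Ghead' (δ : ℝ) (hδ : 0 < δ) :
    IntegrableOn (fun u : ℝ => u^2 * Real.exp (-(u^2/δ^2))) (Ioc 0 δ) := by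
  have hGc : Continuous (fun u : ℝ => u^2 * Real.exp (-(u^2/δ^2))) := by fun_prop
  exact (hGc.integrableOn_Icc).mono_set Ioc_subset_Icc_self

private lemma Gbound' (δ : ℝ) (hδ : 0 < δ) : ∀ u ∈ Ioi δ,
    u^2 * Real.exp (-(u^2/δ^2)) ≤ 27 * δ^6 * u^(-4:ℝ) := by
  intro u hu
  have hu0 : δ < u := hu
  have hup : 0 < u := hδ.trans hu0
  have h1 : Real.exp (-(u^2/δ^2)) ≤ 27 * δ^6 / u^6 := by
    calc Real.exp (-(u^2/δ^2)) ≤ 27 / (u^2/δ^2)^3 := exp_cube' (by positivity)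
      _ = 27 * δ^6 / u^6 := by field_simp
  calc u^2 * Real.exp (-(u^2/δ^2)) ≤ u^2 * (27 * δ^6 / u^6) := by gcongr
    _ = 27 * δ^6 * u^(-4:ℝ) := by
        rw [show (u:ℝ)^(-4:ℝ) = (u^4)⁻¹ by
          rw [show (-4:ℝ) = -(4:ℕ) by norm_num, Real.rpow_neg hup.le, Real.rpow_natCast]]
        field_simp

private lemma Gtail' (δ : ℝ) (hδ : 0 < δ) :
    IntegrableOn (fun u : ℝ => u^2 * Real.exp (-(u^2/δ^2))) (Ioi δ) := by
  have hGc : Continuous (fun u : ℝ => u^2 * Real.exp (-(u^2/δ^2))) := by fun_prop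
  apply Integrable.mono'
    ((integrableOn_Ioi_rpow_of_lt (a := (-4:ℝ)) (by norm_num) hδ).const_mul (27 * δ^6))
    (hGc.aestronglyMeasurable.restrict)
  filter_upwards [ae_restrict_mem measurableSet_Ioi] with u hu
  rw [Real.norm_eq_abs, abs_of_nonneg (by positivity)]
  exact Gbound' δ hδ u hu

private lemma Gintble' (δ : ℝ) (hδ : 0 < δ) :
    IntegrableOn (fun u : ℝ => u^2 * Real.exp (-(u^2/δ^2))) (Ioi 0) := by
  rw [← Ioc_union_Ioi_eq_Ioi hδ.le]
  exact (Ghead' δ hδ).union (Gtail' δ hδ)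

private lemma Gint' (δ : ℝ) (hδ : 0 < δ) :
    ∫ u in Ioi (0:ℝ), u^2 * Real.exp (-(u^2/δ^2)) ≤ 10 * δ^3 := by
  have hsplit : ∫ u in Ioi (0:ℝ), u^2 * Real.exp (-(u^2/δ^2))
      = (∫ u in Ioc 0 δ, u^2 * Real.exp (-(u^2/δ^2)))
        + ∫ u in Ioi δ, u^2 * Real.exp (-(u^2/δ^2)) := by
    rw [← setIntegral_union (Ioc_disjoint_Ioi le_rfl) measurableSet_Ioi (Ghead' δ hδ)
      (Gtail' δ hδ), Ioc_union_Ioi_eq_Ioi hδ.le]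
  rw [hsplit]
  have h1 : ∫ u in Ioc 0 δ, u^2 * Real.exp (-(u^2/δ^2)) ≤ δ^3 := by
    calc ∫ u in Ioc 0 δ, u^2 * Real.exp (-(u^2/δ^2)) ≤ ∫ _u in Ioc 0 δ, δ^2 := by
          apply setIntegral_mono_on (Ghead' δ hδ)
            (integrableOn_const measure_Ioc_lt_top.ne) measurableSet_Ioc
          intro u hu
          calc u^2 * Real.exp (-(u^2/δ^2)) ≤ u^2 * 1 := by
                apply mul_le_mul_of_nonneg_left _ (sq_nonneg u)
                exact Real.exp_le_one_iff.2 (neg_nonpos_of_nonneg (by positivity))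
            _ = u^2 := mul_one _
            _ ≤ δ^2 := by nlinarith [hu.1, hu.2]
      _ = δ * δ^2 := by
          rw [setIntegral_const, measureReal_def, Real.volume_Ioc, smul_eq_mul,
            ENNReal.toReal_ofReal (by linarith)]
          ring_nf
      _ = δ^3 := by ring
  have h2 : ∫ u in Ioi δ, u^2 * Real.exp (-(u^2/δ^2)) ≤ 9 * δ^3 := by
    calc ∫ u in Ioi δ, u^2 * Real.exp (-(u^2/δ^2)) ≤ ∫ u in Ioi δ, 27 * δ^6 * u^(-4:ℝ) :=
          setIntegral_mono_on (Gtail' δ hδ)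
            ((integrableOn_Ioi_rpow_of_lt (by norm_num) hδ).const_mul (27 * δ^6))
            measurableSet_Ioi (Gbound' δ hδ)
      _ = 27 * δ^6 * ∫ u in Ioi δ, u^(-4:ℝ) := by rw [integral_const_mul]
      _ = 27 * δ^6 * (-δ^((-4:ℝ)+1)/((-4)+1)) := by rw [integral_Ioi_rpow_of_lt (by norm_num) hδ]
      _ = 9 * δ^3 := by
          rw [show ((-4:ℝ)+1) = -(3:ℕ) by norm_num, Real.rpow_neg hδ.le, Real.rpow_natCast]
          field_simp; ring
  linarith

private lemma step1' (b : ℝ) (hb : 0 < b) (f : ℝ → ℝ)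
    (hf : ∀ x : ℝ, f x = 1/(3*x^3) - b/(2*x^2))
    (ε : ℝ) (hε : 0 < ε) {y : ℝ} (hy : 1/b < y) :
    (∫ ty in (1/b)..y, ∫ tw in (1/b)..ty,
        1/(y*ty)^4 * Real.exp (1/ε^2 * (-b^3/6 - f y + f tw - f ty)))
      ≤ b^4/2 * (1/y^4) * (y - 1/b)^2 * Real.exp (1/ε^2 * (-b^3/6 - f y)) := by
  have hm : (0:ℝ) < 1/b := by positivity
  set m : ℝ := 1/b with hmdef
  have hmy : m ≤ y := hy.le
  have hy0 : 0 < y := hm.trans hy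
  set E : ℝ := Real.exp (1/ε^2 * (-b^3/6 - f y)) with hE
  have hE0 : 0 < E := Real.exp_pos _
  have hfc : ContinuousOn f (Ioi (0:ℝ)) := by
    have hfeq : f = fun x => 1/(3*x^3) - b/(2*x^2) := funext hf
    rw [hfeq]
    apply ContinuousOn.sub
    · exact continuousOn_const.div (by fun_prop) (fun x hx => by
        have hx0 : (0:ℝ) < x := hx; positivity)
    · exact continuousOn_const.div (by fun_prop) (fun x hx => by
        have hx0 : (0:ℝ) < x := hx; positivity)
  have inner_le : ∀ ty ∈ Ioc m y,
      (∫ tw in m..ty, 1/(y*ty)^4 * Real.exp (1/ε^2 * (-b^3/6 - f y + f tw - f ty)))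
        ≤ (ty - m) * ((b^4/y^4) * E) := by
    intro ty hty
    have hty0 : 0 < ty := hm.trans hty.1
    have hmty : m ≤ ty := hty.1.le
    have hsub : uIcc m ty ⊆ Ioi (0:ℝ) := by
      rw [uIcc_of_le hmty]
      intro x hx; exact hm.trans_le hx.1
    have hgc : ContinuousOn
        (fun tw => 1/(y*ty)^4 * Real.exp (1/ε^2 * (-b^3/6 - f y + f tw - f ty)))
        (uIcc m ty) := by
      apply ContinuousOn.mul continuousOn_const
      apply Real.continuous_exp.comp_continuousOn
      apply ContinuousOn.mul continuousOn_const
      exact ((continuousOn_const.add (hfc.mono hsub)).sub continuousOn_const)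
    have hgi : IntervalIntegrable
        (fun tw => 1/(y*ty)^4 * Real.exp (1/ε^2 * (-b^3/6 - f y + f tw - f ty)))
        volume m ty := hgc.intervalIntegrable
    have hpt : ∀ tw ∈ Icc m ty,
        1/(y*ty)^4 * Real.exp (1/ε^2 * (-b^3/6 - f y + f tw - f ty))
          ≤ 1/(y*ty)^4 * E := by
      intro tw htw
      apply mul_le_mul_of_nonneg_left _ (by positivity)
      apply Real.exp_le_exp.2
      apply mul_le_mul_of_nonneg_left _ (by positivity)
      have hftw : f tw ≤ f ty := by
        rw [hf tw, hf ty]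
        exact fmono' b hb htw.1 htw.2
      linarith
    calc (∫ tw in m..ty, 1/(y*ty)^4 * Real.exp (1/ε^2 * (-b^3/6 - f y + f tw - f ty)))
        ≤ ∫ _tw in m..ty, 1/(y*ty)^4 * E :=
          intervalIntegral.integral_mono_on hmty hgi intervalIntegrable_const hpt
      _ = (ty - m) * (1/(y*ty)^4 * E) := by
          rw [intervalIntegral.integral_const, smul_eq_mul]
      _ ≤ (ty - m) * ((b^4/y^4) * E) := by
          apply mul_le_mul_of_nonneg_left _ (by linarith [hty.1])
          apply mul_le_mul_of_nonneg_right _ hE0.le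
          rw [mul_pow, div_le_div_iff₀ (by positivity) (by positivity)]
          calc 1 * y^4 = y^4 * (m^4 * b^4) := by
                rw [hmdef]; field_simp
            _ ≤ y^4 * (ty^4 * b^4) := by
                have h4 : m^4 ≤ ty^4 := pow_le_pow_left₀ hm.le hmty 4
                have hb4 : (0:ℝ) ≤ b^4 := by positivity
                have hy4 : (0:ℝ) ≤ y^4 := by positivity
                exact mul_le_mul_of_nonneg_left (mul_le_mul_of_nonneg_right h4 hb4) hy4
            _ = b^4 * (y^4*ty^4) := by ring
  rw [intervalIntegral.integral_of_le hmy]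
  have hmaj : IntegrableOn (fun ty => (ty - m) * ((b^4/y^4) * E)) (Ioc m y) := by
    apply Continuous.integrableOn_Ioc; fun_prop
  calc (∫ ty in Ioc m y, ∫ tw in m..ty,
          1/(y*ty)^4 * Real.exp (1/ε^2 * (-b^3/6 - f y + f tw - f ty)))
      ≤ ∫ ty in Ioc m y, (ty - m) * ((b^4/y^4) * E) := by
        apply integral_mono_of_nonneg _ hmaj
        · filter_upwards [ae_restrict_mem measurableSet_Ioc] with ty hty
          exact inner_le ty hty
        · filter_upwards [ae_restrict_mem measurableSet_Ioc] with ty hty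
          apply intervalIntegral.integral_nonneg hty.1.le
          intro tw _; positivity
    _ = (∫ ty in m..y, (ty - m)) * ((b^4/y^4) * E) := by
        rw [← intervalIntegral.integral_of_le hmy, intervalIntegral.integral_mul_const]
    _ = b^4/2 * (1/y^4) * (y - m)^2 * E := by
        have hid : (∫ ty in m..y, (ty - m)) = (y - m)^2/2 := by
          rw [intervalIntegral.integral_comp_sub_right (fun x => x) m, sub_self,
            integral_id]
          ring
        rw [hid]; ring

private lemma smalltail' (b ε : ℝ) (hb : 0 < b) (hε0 : 0 < ε) (hε1 : ε ≤ 1)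
    (hεb : ε ≤ b^4/23328) : b^5/2 * Real.exp (-(b^3/(12*ε^2))) ≤ ε^3 := by
  have hx : (0:ℝ) < b^3/(12*ε^2) := by positivity
  have h27 := exp_cube' hx
  have e3 : 27 / (b^3/(12*ε^2))^3 = 46656*ε^6/b^9 := by
    field_simp; ring
  rw [e3] at h27
  have hε3 : ε^3 ≤ ε := by
    calc ε^3 ≤ ε^1 := pow_le_pow_of_le_one hε0.le hε1 (by norm_num)
      _ = ε := pow_one ε
  have hb4 : 23328 * ε^3 ≤ b^4 := by linarith
  calc b^5/2 * Real.exp (-(b^3/(12*ε^2))) ≤ b^5/2 * (46656*ε^6/b^9) := by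
        apply mul_le_mul_of_nonneg_left h27 (by positivity)
    _ = 23328 * ε^3 / b^4 * ε^3 := by field_simp; ring
    _ ≤ 1 * ε^3 := by
        apply mul_le_mul_of_nonneg_right _ (by positivity)
        rw [div_le_one (by positivity)]
        exact hb4
    _ = ε^3 := one_mul _

/-- (Uniform bound (4.26) for the second moment of the downcrossing time.) For every `b > 0`,
with `f(x) := 1/(3x³) − b/(2x²)`, the quantity
`(1/ε³)·∫_{1/b}^∞ ∫_{1/b}^{y} ∫_{1/b}^{ỹ} (y·ỹ)⁻⁴·exp((1/ε²)(−b³/6 − f(y) + f(w̃) − f(ỹ))) dw̃ dỹ dy`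
has finite limsup as `ε → 0⁺`, i.e. it is eventually bounded above near `0⁺`. -/
theorem statement17 (b : ℝ) (hb : 0 < b)
    (f : ℝ → ℝ) (hf : ∀ x : ℝ, f x = 1 / (3 * x ^ 3) - b / (2 * x ^ 2)) :
    ∃ C : ℝ, ∀ᶠ ε in 𝓝[>] (0 : ℝ),
      1 / ε ^ 3 *
          ∫ y in Ioi (1 / b), ∫ ty in (1 / b)..y, ∫ tw in (1 / b)..ty,
            1 / (y * ty) ^ 4 *
              Real.exp (1 / ε ^ 2 * (-b ^ 3 / 6 - f y + f tw - f ty)) ≤ C := by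
  have hm : (0:ℝ) < 1/b := by positivity
  have hc : (0:ℝ) < b^5/16 := by positivity
  set sc : ℝ := Real.sqrt (b^5/16) with hscdef
  have hsc : 0 < sc := Real.sqrt_pos.2 hc
  have hsc2 : sc^2 = b^5/16 := Real.sq_sqrt hc.le
  have hr : (0:ℝ) < min 1 (b^4/23328) := lt_min one_pos (by positivity)
  refine ⟨5*b^8/sc^3 + 1, ?_⟩
  filter_upwards [Ioo_mem_nhdsGT_of_mem (show (0:ℝ) ∈ Ico 0 (min 1 (b^4/23328)) from
    ⟨le_refl 0, hr⟩)] with ε hεmem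
  obtain ⟨hε0, hεr⟩ := hεmem
  have hε1 : ε ≤ 1 := (hεr.trans_le (min_le_left _ _)).le
  have hεb : ε ≤ b^4/23328 := (hεr.trans_le (min_le_right _ _)).le
  set δ : ℝ := ε / sc with hδdef
  have hδ : 0 < δ := by positivity
  have hδ2 : δ^2 = ε^2/(b^5/16) := by rw [hδdef, div_pow, hsc2]
  set P : ℝ → ℝ := fun y => b^8/2 * ((y - 1/b)^2 * Real.exp (-((y - 1/b)^2/δ^2))) with hP
  set Q : ℝ → ℝ := fun y => (b^4/2 * Real.exp (-(b^3/(12*ε^2)))) * y^(-2:ℝ) with hQ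
  have hPint : IntegrableOn P (Ioi (1/b)) := by
    have h := shift_integrableOn' (1/b) (1/b) (fun u => u^2 * Real.exp (-(u^2/δ^2)))
      (by rw [sub_self]; exact Gintble' δ hδ)
    exact h.const_mul _
  have hQint : IntegrableOn Q (Ioi (1/b)) :=
    (integrableOn_Ioi_rpow_of_lt (a := (-2:ℝ)) (by norm_num) hm).const_mul _
  -- pointwise bound
  have key : ∀ y ∈ Ioi (1/b),
      (∫ ty in (1/b)..y, ∫ tw in (1/b)..ty,
        1 / (y * ty) ^ 4 * Real.exp (1 / ε ^ 2 * (-b ^ 3 / 6 - f y + f tw - f ty)))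
      ≤ P y + Q y := by
    intro y hy
    have hy' : 1/b < y := hy
    have hy0 : 0 < y := hm.trans hy'
    have h1 := step1' b hb f hf ε hε0 hy'
    have hE0 : (0:ℝ) ≤ Real.exp (1/ε^2 * (-b^3/6 - f y)) := (Real.exp_pos _).le
    rcases le_or_gt y (2/b) with h2 | h2
    · -- y close to 1/b : use the quadratic lower bound
      have hq := quadlower' b hb hy'.le h2
      rw [← hf y] at hq
      have hqE : Real.exp (1/ε^2 * (-b^3/6 - f y)) ≤ Real.exp (-((y - 1/b)^2/δ^2)) := by
        apply Real.exp_le_exp.2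
        have e1 : (y - 1/b)^2/δ^2 = b^5/16*(y - 1/b)^2/ε^2 := by
          rw [hδ2]; field_simp
        rw [e1]
        have h3 := mul_le_mul_of_nonneg_left
          (show -b^3/6 - f y ≤ -(b^5/16*(y - 1/b)^2) by linarith)
          (show (0:ℝ) ≤ 1/ε^2 by positivity)
        have h4 : 1/ε^2 * -(b^5/16*(y - 1/b)^2) = -(b^5/16*(y - 1/b)^2/ε^2) := by ring
        linarith
      have hy4 : 1/y^4 ≤ b^4 := by
        rw [div_le_iff₀ (by positivity)]
        have hby : 1 ≤ b*y := by
          have := (div_lt_iff₀ hb).1 hy'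
          nlinarith
        calc (1:ℝ) ≤ (b*y)^4 := one_le_pow₀ hby
          _ = b^4 * y^4 := by ring
      have hQnn : 0 ≤ Q y := by
        rw [hQ]
        exact mul_nonneg (by positivity) (Real.rpow_nonneg hy0.le _)
      calc (∫ ty in (1/b)..y, ∫ tw in (1/b)..ty,
              1 / (y * ty) ^ 4 * Real.exp (1 / ε ^ 2 * (-b ^ 3 / 6 - f y + f tw - f ty)))
          ≤ b^4/2 * (1/y^4) * (y - 1/b)^2 * Real.exp (1/ε^2 * (-b^3/6 - f y)) := h1
        _ ≤ b^4/2 * b^4 * (y - 1/b)^2 * Real.exp (-((y - 1/b)^2/δ^2)) := by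
            gcongr
        _ = P y := by rw [hP]; ring
        _ ≤ P y + Q y := le_add_of_nonneg_right hQnn
    · -- y far from 1/b : use the tail lower bound
      have ht := taillower' b hb h2.le
      rw [← hf y] at ht
      have htE : Real.exp (1/ε^2 * (-b^3/6 - f y)) ≤ Real.exp (-(b^3/(12*ε^2))) := by
        apply Real.exp_le_exp.2
        have h3 := mul_le_mul_of_nonneg_left
          (show -b^3/6 - f y ≤ -(b^3/12) by linarith)
          (show (0:ℝ) ≤ 1/ε^2 by positivity)
        have h4 : 1/ε^2 * -(b^3/12) = -(b^3/(12*ε^2)) := by ring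
        linarith
      have hrw : y^(-2:ℝ) = 1/y^2 := by
        rw [show (-2:ℝ) = -(2:ℕ) by norm_num, Real.rpow_neg hy0.le, Real.rpow_natCast, one_div]
      have hgeo : b^4/2 * (1/y^4) * (y - 1/b)^2 ≤ (b^4/2) * y^(-2:ℝ) := by
        rw [hrw]
        have hsq : (y - 1/b)^2 ≤ y^2 := by nlinarith [hm, hy']
        calc b^4/2 * (1/y^4) * (y - 1/b)^2 ≤ b^4/2 * (1/y^4) * y^2 := by gcongr
          _ = b^4/2 * (1/y^2) := by field_simp
      have hPnn : 0 ≤ P y := by rw [hP]; positivity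
      calc (∫ ty in (1/b)..y, ∫ tw in (1/b)..ty,
              1 / (y * ty) ^ 4 * Real.exp (1 / ε ^ 2 * (-b ^ 3 / 6 - f y + f tw - f ty)))
          ≤ b^4/2 * (1/y^4) * (y - 1/b)^2 * Real.exp (1/ε^2 * (-b^3/6 - f y)) := h1
        _ ≤ ((b^4/2) * y^(-2:ℝ)) * Real.exp (-(b^3/(12*ε^2))) := by
            apply mul_le_mul hgeo htE hE0
            have : (0:ℝ) ≤ y^(-2:ℝ) := Real.rpow_nonneg hy0.le _
            positivity
        _ = Q y := by rw [hQ]; ring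
        _ ≤ P y + Q y := le_add_of_nonneg_left hPnn
  -- overall bound of the triple integral
  have Itot : (∫ y in Ioi (1/b), ∫ ty in (1/b)..y, ∫ tw in (1/b)..ty,
        1 / (y * ty) ^ 4 * Real.exp (1 / ε ^ 2 * (-b ^ 3 / 6 - f y + f tw - f ty)))
      ≤ ∫ y in Ioi (1/b), (P y + Q y) := by
    apply integral_mono_of_nonneg
    · filter_upwards [ae_restrict_mem measurableSet_Ioi] with y hy
      apply intervalIntegral.integral_nonneg (le_of_lt hy)
      intro ty hty
      apply intervalIntegral.integral_nonneg hty.1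
      intro tw _; positivity
    · exact hPint.add hQint
    · filter_upwards [ae_restrict_mem measurableSet_Ioi] with y hy
      exact key y hy
  have Isum : ∫ y in Ioi (1/b), (P y + Q y)
      = (∫ y in Ioi (1/b), P y) + ∫ y in Ioi (1/b), Q y := integral_add hPint hQint
  have IP : ∫ y in Ioi (1/b), P y ≤ 5*b^8*δ^3 := by
    have hshift := shift_setIntegral' (1/b) (1/b) (fun u => u^2 * Real.exp (-(u^2/δ^2)))
    rw [sub_self] at hshift
    calc ∫ y in Ioi (1/b), P y
        = b^8/2 * ∫ y in Ioi (1/b), ((y - 1/b)^2 * Real.exp (-((y - 1/b)^2/δ^2))) := by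
          rw [hP, integral_const_mul]
      _ = b^8/2 * ∫ u in Ioi (0:ℝ), u^2 * Real.exp (-(u^2/δ^2)) := by rw [← hshift]
      _ ≤ b^8/2 * (10*δ^3) := mul_le_mul_of_nonneg_left (Gint' δ hδ) (by positivity)
      _ = 5*b^8*δ^3 := by ring
  have IQ : ∫ y in Ioi (1/b), Q y = b^5/2 * Real.exp (-(b^3/(12*ε^2))) := by
    rw [hQ, integral_const_mul, integral_Ioi_rpow_of_lt (by norm_num) hm]
    rw [show ((-2:ℝ)+1) = -(1:ℕ) by norm_num, Real.rpow_neg hm.le, Real.rpow_natCast,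
      pow_one, one_div, inv_inv]
    ring
  have Ifin : (∫ y in Ioi (1/b), ∫ ty in (1/b)..y, ∫ tw in (1/b)..ty,
        1 / (y * ty) ^ 4 * Real.exp (1 / ε ^ 2 * (-b ^ 3 / 6 - f y + f tw - f ty)))
      ≤ 5*b^8*δ^3 + b^5/2 * Real.exp (-(b^3/(12*ε^2))) := by
    rw [Isum, IQ] at Itot
    linarith [IP]
  -- final numeric estimate
  have e1 : 1/ε^3 * (5*b^8*δ^3) = 5*b^8/sc^3 := by
    rw [hδdef]
    field_simp
  have e2 : b^5/2 * Real.exp (-(b^3/(12*ε^2))) ≤ ε^3 := smalltail' b ε hb hε0 hε1 hεb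
  calc 1 / ε ^ 3 *
          (∫ y in Ioi (1/b), ∫ ty in (1/b)..y, ∫ tw in (1/b)..ty,
            1 / (y * ty) ^ 4 * Real.exp (1 / ε ^ 2 * (-b ^ 3 / 6 - f y + f tw - f ty)))
      ≤ 1/ε^3 * (5*b^8*δ^3 + b^5/2 * Real.exp (-(b^3/(12*ε^2)))) :=
        mul_le_mul_of_nonneg_left Ifin (by positivity)
    _ = 1/ε^3 * (5*b^8*δ^3) + 1/ε^3 * (b^5/2 * Real.exp (-(b^3/(12*ε^2)))) := by ring
    _ ≤ 5*b^8/sc^3 + 1 := by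
        rw [e1]
        have : 1/ε^3 * (b^5/2 * Real.exp (-(b^3/(12*ε^2)))) ≤ 1/ε^3 * ε^3 :=
          mul_le_mul_of_nonneg_left e2 (by positivity)
        have h4 : 1/ε^3 * ε^3 = 1 := by field_simp
        linarith
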